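/- Let H₁ = (V₁,E₁) and H₂ = (V₂,E₂) be undirected graphs, both with terminals s and t, where V₁ ∩ V₂ = {s,t} and E₁ ∩ E₂ = ∅, and let G = (V₁ ∪ V₂, E₁ ∪ E₂) be their parallel composition; let M ⊆ E₁ ∪ E₂. (i) If S₁ ⊆ E₁ is a feasible FTP solution for (H₁,s,t,M∩E₁,n₁) and S₂ ⊆ E₂ is a feasible FTP solution for (H₂,s,t,M∩E₂,n₂), then S₁ ∪ S₂ is a feasible FTP solution for (G,s,t,M,n₁+n₂+1). (ii) Conversely, if S ⊆ E₁ ∪ E₂ is a feasible FTP solution for (G,s,t,M,i), and for j ∈ {1,2} we define nⱼ as the largest integer n ≥ 0 such that S ∩ Eⱼ is feasible for (Hⱼ,s,t,M∩Eⱼ,n), with nⱼ = −1 when S ∩ Eⱼ contains no s-t path, then i ≤ n₁ + n₂ + 1. -/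

import Mathlib

/-- `uReach S a b`: the undirected graph with edge set `S` contains an `a`-`b` path. -/
def uReach {V : Type*} [DecidableEq V] (S : Finset (Sym2 V)) (a b : V) : Prop :=
  Relation.ReflTransGen (fun x y => s(x, y) ∈ S) a b

/-- Feasibility for undirected Fault-Tolerant Path: for every `F ⊆ M` with `|F| ≤ k`,
the graph `(V, S \ F)` contains an `s`-`t` path. -/
def ftpuFeasible {V : Type*} [DecidableEq V] (S M : Finset (Sym2 V)) (s t : V) (k : ℕ) : Prop :=
  ∀ F ⊆ M, F.card ≤ k → uReach (S \ F) s t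

/-- `survivesU S M s t m`: `S` tolerates any set of fewer than `m` vulnerable edge
failures. For `m ≥ 1` this is feasibility with parameter `m - 1`; `m = 0` always
holds. If `n` denotes the largest FTP parameter for which `S` is feasible (with
`n = -1` when `S` contains no `s`-`t` path), then the greatest `m` with
`survivesU S M s t m` equals `n + 1`. -/
def survivesU {V : Type*} [DecidableEq V] (S M : Finset (Sym2 V)) (s t : V) (m : ℕ) : Prop :=
  ∀ F ⊆ M, F.card < m → uReach (S \ F) s t

lemma uReach_mono {V : Type*} [DecidableEq V] {S T : Finset (Sym2 V)} {a b : V}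
    (hST : S ⊆ T) (h : uReach S a b) : uReach T a b :=
  Relation.ReflTransGen.mono (r := fun x y => s(x, y) ∈ S) (fun _ _ hxy => hST hxy) a b h

/-- Path splitting across a parallel composition. -/
lemma uReach_split {V : Type*} [DecidableEq V] (V₁ V₂ : Finset V) (A B : Finset (Sym2 V))
    (s t : V) (hV : V₁ ∩ V₂ = {s, t})
    (hA : ∀ e ∈ A, ∀ x ∈ e, x ∈ V₁) (hB : ∀ e ∈ B, ∀ x ∈ e, x ∈ V₂)
    (hs : s ∈ V₁ ∩ V₂) (ht : t ∈ V₁ ∩ V₂)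
    (h : uReach (A ∪ B) s t) : uReach A s t ∨ uReach B s t := by
  have key : ∀ x : V, uReach (A ∪ B) x t →
      ((x ∈ V₁ → uReach A x t ∨ (uReach A x s ∧ uReach B s t)) ∧
       (x ∈ V₂ → uReach B x t ∨ (uReach B x s ∧ uReach A s t))) := by
    intro x hx
    unfold uReach at hx
    induction hx using Relation.ReflTransGen.head_induction_on with
    | refl =>
      exact ⟨fun _ => Or.inl Relation.ReflTransGen.refl,
             fun _ => Or.inl Relation.ReflTransGen.refl⟩
    | head h' _ ih =>
      rename_i a c _
      rcases Finset.mem_union.mp h' with hAe | hBe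
      · -- the first edge is in A; both endpoints lie in V₁
        have haV₁ : a ∈ V₁ := hA _ hAe a (Sym2.mem_mk_left a c)
        have hcV₁ : c ∈ V₁ := hA _ hAe c (Sym2.mem_mk_right a c)
        have step : uReach A c t ∨ (uReach A c s ∧ uReach B s t) := ih.1 hcV₁
        have part1 : uReach A a t ∨ (uReach A a s ∧ uReach B s t) := by
          rcases step with h1 | ⟨h1, h2⟩
          · exact Or.inl (Relation.ReflTransGen.head hAe h1)
          · exact Or.inr ⟨Relation.ReflTransGen.head hAe h1, h2⟩
        refine ⟨fun _ => part1, fun haV₂ => ?_⟩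
        have hast : a = s ∨ a = t := by
          have : a ∈ V₁ ∩ V₂ := Finset.mem_inter.mpr ⟨haV₁, haV₂⟩
          rw [hV] at this
          simpa using this
        rcases hast with rfl | rfl
        · rcases part1 with h1 | ⟨_, h2⟩
          · exact Or.inr ⟨Relation.ReflTransGen.refl, h1⟩
          · exact Or.inl h2
        · exact Or.inl Relation.ReflTransGen.refl
      · -- symmetric: the first edge is in B
        have haV₂ : a ∈ V₂ := hB _ hBe a (Sym2.mem_mk_left a c)
        have hcV₂ : c ∈ V₂ := hB _ hBe c (Sym2.mem_mk_right a c)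
        have step : uReach B c t ∨ (uReach B c s ∧ uReach A s t) := ih.2 hcV₂
        have part2 : uReach B a t ∨ (uReach B a s ∧ uReach A s t) := by
          rcases step with h1 | ⟨h1, h2⟩
          · exact Or.inl (Relation.ReflTransGen.head hBe h1)
          · exact Or.inr ⟨Relation.ReflTransGen.head hBe h1, h2⟩
        refine ⟨fun haV₁ => ?_, fun _ => part2⟩
        have hast : a = s ∨ a = t := by
          have : a ∈ V₁ ∩ V₂ := Finset.mem_inter.mpr ⟨haV₁, haV₂⟩
          rw [hV] at this
          simpa using this
        rcases hast with rfl | rfl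
        · rcases part2 with h1 | ⟨_, h2⟩
          · exact Or.inr ⟨Relation.ReflTransGen.refl, h1⟩
          · exact Or.inl h2
        · exact Or.inl Relation.ReflTransGen.refl
  have := (key s h).1 (Finset.mem_inter.mp hs).1
  rcases this with h1 | ⟨_, h2⟩
  · exact Or.inl h1
  · exact Or.inr h2

/-- Parallel composition: `H₁ = (V₁, E₁)` and `H₂ = (V₂, E₂)` both have terminals
`s, t`, with `V₁ ∩ V₂ = {s, t}` and `E₁ ∩ E₂ = ∅`.
(i) If `S₁ ⊆ E₁` is feasible for `(H₁, s, t, M ∩ E₁, n₁)` and `S₂ ⊆ E₂` is feasible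
for `(H₂, s, t, M ∩ E₂, n₂)`, then `S₁ ∪ S₂` is feasible for `(G, s, t, M, n₁+n₂+1)`.
(ii) If `S ⊆ E₁ ∪ E₂` is feasible for `(G, s, t, M, i)`, and `m₁, m₂` are the
greatest survival thresholds of `S ∩ E₁`, `S ∩ E₂` (so `mⱼ = nⱼ + 1`, where `nⱼ` is
the largest feasible parameter, `nⱼ = -1` when there is no `s`-`t` path), then
`i ≤ n₁ + n₂ + 1`, i.e. `(i : ℤ) ≤ m₁ + m₂ - 1`. -/
theorem stmt11 {V : Type*} [DecidableEq V] (V₁ V₂ : Finset V) (E₁ E₂ : Finset (Sym2 V))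
    (s t : V) (M : Finset (Sym2 V))
    (hV : V₁ ∩ V₂ = {s, t})
    (hE₁ : ∀ e ∈ E₁, ∀ x ∈ e, x ∈ V₁)
    (hE₂ : ∀ e ∈ E₂, ∀ x ∈ e, x ∈ V₂)
    (hE : E₁ ∩ E₂ = ∅)
    (hs : s ∈ V₁ ∩ V₂) (ht : t ∈ V₁ ∩ V₂)
    (hM : M ⊆ E₁ ∪ E₂) :
    (∀ (S₁ S₂ : Finset (Sym2 V)) (n₁ n₂ : ℕ), S₁ ⊆ E₁ → S₂ ⊆ E₂ →
      ftpuFeasible S₁ (M ∩ E₁) s t n₁ → ftpuFeasible S₂ (M ∩ E₂) s t n₂ →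
      ftpuFeasible (S₁ ∪ S₂) M s t (n₁ + n₂ + 1)) ∧
    (∀ (S : Finset (Sym2 V)) (i m₁ m₂ : ℕ), S ⊆ E₁ ∪ E₂ →
      ftpuFeasible S M s t i →
      IsGreatest {m : ℕ | survivesU (S ∩ E₁) (M ∩ E₁) s t m} m₁ →
      IsGreatest {m : ℕ | survivesU (S ∩ E₂) (M ∩ E₂) s t m} m₂ →
      (i : ℤ) ≤ (m₁ : ℤ) + (m₂ : ℤ) - 1) := by
  constructor
  · -- part (i)
    intro S₁ S₂ n₁ n₂ hS₁ hS₂ hf₁ hf₂ F hF hcard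
    have hdisj : Disjoint (F ∩ E₁) (F ∩ E₂) := by
      refine Finset.disjoint_left.mpr ?_
      intro e he₁ he₂
      have : e ∈ E₁ ∩ E₂ :=
        Finset.mem_inter.mpr ⟨(Finset.mem_inter.mp he₁).2, (Finset.mem_inter.mp he₂).2⟩
      simp [hE] at this
    have hcover : F ∩ E₁ ∪ F ∩ E₂ = F := by
      rw [← Finset.inter_union_distrib_left]
      exact Finset.inter_eq_left.mpr (hF.trans hM)
    have hsum : (F ∩ E₁).card + (F ∩ E₂).card ≤ n₁ + n₂ + 1 := by
      rw [← Finset.card_union_of_disjoint hdisj, hcover]; exact hcard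
    have hcase : (F ∩ E₁).card ≤ n₁ ∨ (F ∩ E₂).card ≤ n₂ := by omega
    rcases hcase with h1 | h2
    · have := hf₁ (F ∩ E₁) (Finset.inter_subset_inter hF (le_refl E₁)) h1
      refine uReach_mono ?_ this
      intro e he
      rcases Finset.mem_sdiff.mp he with ⟨heS, heF⟩
      refine Finset.mem_sdiff.mpr ⟨Finset.mem_union_left _ heS, fun heF' => ?_⟩
      exact heF (Finset.mem_inter.mpr ⟨heF', hS₁ heS⟩)
    · have := hf₂ (F ∩ E₂) (Finset.inter_subset_inter hF (le_refl E₂)) h2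
      refine uReach_mono ?_ this
      intro e he
      rcases Finset.mem_sdiff.mp he with ⟨heS, heF⟩
      refine Finset.mem_sdiff.mpr ⟨Finset.mem_union_right _ heS, fun heF' => ?_⟩
      exact heF (Finset.mem_inter.mpr ⟨heF', hS₂ heS⟩)
  · -- part (ii)
    intro S i m₁ m₂ hS hf hg₁ hg₂
    by_contra hlt
    push_neg at hlt
    have hi : m₁ + m₂ ≤ i := by omega
    -- bad set for side 1
    have hnot₁ : ¬ survivesU (S ∩ E₁) (M ∩ E₁) s t (m₁ + 1) := by
      intro h
      have := hg₁.2 h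
      omega
    have hnot₂ : ¬ survivesU (S ∩ E₂) (M ∩ E₂) s t (m₂ + 1) := by
      intro h
      have := hg₂.2 h
      omega
    unfold survivesU at hnot₁ hnot₂
    push_neg at hnot₁ hnot₂
    obtain ⟨F₁, hF₁M, hF₁c, hF₁r⟩ := hnot₁
    obtain ⟨F₂, hF₂M, hF₂c, hF₂r⟩ := hnot₂
    set F := F₁ ∪ F₂ with hFdef
    have hFM : F ⊆ M := Finset.union_subset
      (hF₁M.trans (Finset.inter_subset_left)) (hF₂M.trans (Finset.inter_subset_left))
    have hFc : F.card ≤ i := by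
      calc F.card ≤ F₁.card + F₂.card := Finset.card_union_le _ _
        _ ≤ m₁ + m₂ := by omega
        _ ≤ i := hi
    have hreach := hf F hFM hFc
    have hsub : S \ F ⊆ ((S ∩ E₁) \ F₁) ∪ ((S ∩ E₂) \ F₂) := by
      intro e he
      rcases Finset.mem_sdiff.mp he with ⟨heS, heF⟩
      rcases Finset.mem_union.mp (hS heS) with h1 | h2
      · refine Finset.mem_union_left _ (Finset.mem_sdiff.mpr
          ⟨Finset.mem_inter.mpr ⟨heS, h1⟩, fun h => heF (Finset.mem_union_left _ h)⟩)
      · refine Finset.mem_union_right _ (Finset.mem_sdiff.mpr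
          ⟨Finset.mem_inter.mpr ⟨heS, h2⟩, fun h => heF (Finset.mem_union_right _ h)⟩)
    have hreach' := uReach_mono hsub hreach
    have hA : ∀ e ∈ (S ∩ E₁) \ F₁, ∀ x ∈ e, x ∈ V₁ := by
      intro e he x hx
      exact hE₁ e (Finset.mem_inter.mp (Finset.mem_sdiff.mp he).1).2 x hx
    have hB : ∀ e ∈ (S ∩ E₂) \ F₂, ∀ x ∈ e, x ∈ V₂ := by
      intro e he x hx
      exact hE₂ e (Finset.mem_inter.mp (Finset.mem_sdiff.mp he).1).2 x hx
    rcases uReach_split V₁ V₂ _ _ s t hV hA hB hs ht hreach' with h | h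
    · exact hF₁r h
    · exact hF₂r h
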